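/- Let Q_m be a causal conditioning distribution on X^m given Z^{m-1} and define Q_{Nm} as its N-fold product over consecutive length-m blocks. Then there exists a type hat{Q}_{Nm} of concatenated code-trees (depending only on Q_m and N, not on the channel) such that for every channel P, the average error probability of random coding uniform over the type class of hat{Q}_{Nm} satisfies P_e(Nm, R, uniform-over-type, P) <= exp(2 N m delta) * P_e(Nm, R + m delta, Q_{Nm}, P), where delta = |X|^{D(m)} log(N+1)/(Nm) and D(m) = (|Z|^m - 1)/(|Z| - 1). -/

import Mathlib

open Classical

/-- The type (empirical distribution, unnormalized: counts out of `N`) of a concatenated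
code-tree `b`, i.e. of an `N`-tuple of depth-`m` code-trees. -/
noncomputable def typeOf {T : Type} [DecidableEq T] {N : ℕ} (b : Fin N → T) : T → ℕ :=
  fun t => (Finset.univ.filter fun i => b i = t).card

/-- Average (over messages) error probability of the codebook `c` of `M` code-trees over
the channel `Pch` under maximum-likelihood decoding (ties counted as errors). -/
noncomputable def mlErr {B O : Type} [Fintype O] (M : ℕ)
    (Pch : B → O → ℝ) (c : Fin M → B) : ℝ :=
  (M : ℝ)⁻¹ * ∑ w : Fin M,
    ∑ o ∈ Finset.univ.filter
      (fun o : O => ∃ w', w' ≠ w ∧ Pch (c w) o ≤ Pch (c w') o), Pch (c w) o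

/-- Average error probability `P_e(M, Q, Pch)` of a random code of `M` code-trees drawn
i.i.d. from the distribution `Q` on code-trees, used over channel `Pch` with
maximum-likelihood decoding. -/
noncomputable def randErr {B O : Type} [Fintype B] [Fintype O] (M : ℕ)
    (Q : B → ℝ) (Pch : B → O → ℝ) : ℝ :=
  ∑ c : Fin M → B, (∏ w, Q (c w)) * mlErr M Pch c

/-! ### Auxiliary material for the proof -/

section TypeAux

variable {T : Type} [DecidableEq T] [Fintype T] {N : ℕ}

omit [Fintype T] in
lemma typeOf_le (b : Fin N → T) (t : T) : typeOf b t ≤ N := by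
  classical
  calc typeOf b t ≤ (Finset.univ : Finset (Fin N)).card := Finset.card_filter_le _ _
  _ = N := Finset.card_fin N

lemma prod_comp_typeOf (f : T → ℝ) (b : Fin N → T) :
    ∏ i, f (b i) = ∏ t : T, f t ^ typeOf b t := by
  classical
  rw [← Finset.prod_fiberwise_of_maps_to (g := b) (t := Finset.univ)
    (fun i _ => Finset.mem_univ _) (fun i => f (b i))]
  refine Finset.prod_congr rfl fun t _ => ?_
  rw [typeOf, ← Finset.prod_const]
  refine Finset.prod_congr rfl fun i hi => ?_
  rw [(Finset.mem_filter.1 hi).2]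

lemma prod_comp_eq_of_typeOf_eq (f : T → ℝ) {b b' : Fin N → T}
    (h : typeOf b = typeOf b') : ∏ i, f (b i) = ∏ i, f (b' i) := by
  rw [prod_comp_typeOf, prod_comp_typeOf, h]

lemma card_image_typeOf_le :
    (Finset.univ.image (typeOf (T := T) (N := N))).card ≤ (N + 1) ^ Fintype.card T := by
  classical
  have h : (Finset.univ.image (typeOf (T := T) (N := N))).card
      ≤ (Finset.univ : Finset (T → Fin (N + 1))).card := by
    refine Finset.card_le_card_of_injOn
      (fun τ t => ⟨τ t % (N + 1), Nat.mod_lt _ (Nat.succ_pos N)⟩)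
      (fun _ _ => Finset.mem_univ _) ?_
    intro τ1 h1 τ2 h2 heq
    rw [Finset.mem_coe] at h1 h2
    obtain ⟨b1, -, hb1⟩ := Finset.mem_image.1 h1
    obtain ⟨b2, -, hb2⟩ := Finset.mem_image.1 h2
    funext t
    have e1 : τ1 t ≤ N := hb1 ▸ typeOf_le b1 t
    have e2 : τ2 t ≤ N := hb2 ▸ typeOf_le b2 t
    have h3 : τ1 t % (N + 1) = τ2 t % (N + 1) :=
      congrArg Fin.val (congrFun heq t)
    rwa [Nat.mod_eq_of_lt (Nat.lt_succ_of_le e1),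
      Nat.mod_eq_of_lt (Nat.lt_succ_of_le e2)] at h3
  simpa [Finset.card_univ, Fintype.card_fun, Fintype.card_fin] using h

end TypeAux

section PickAux

/-- a canonical subset of cardinality `k` of a finset with at least `k` elements -/
noncomputable def pickSet {α : Type*} (k : ℕ) (t : Finset α) : Finset α :=
  @dite _ (k ≤ t.card) (Classical.propDecidable _)
    (fun h => (Finset.exists_subset_card_eq h).choose) (fun _ => ∅)

lemma pickSet_subset {α : Type*} (k : ℕ) (t : Finset α) : pickSet k t ⊆ t := by
  unfold pickSet
  split
  · exact (Finset.exists_subset_card_eq ‹_›).choose_spec.1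
  · exact Finset.empty_subset _

lemma pickSet_card {α : Type*} {k : ℕ} {t : Finset α} (h : k ≤ t.card) :
    (pickSet k t).card = k := by
  rw [pickSet, dif_pos h]
  exact (Finset.exists_subset_card_eq h).choose_spec.2

end PickAux

section ErrAux

variable {B O : Type} [Fintype O] {M M' : ℕ}

/-- per-message error weight of a codebook -/
noncomputable def errW (Pch : B → O → ℝ) (c : Fin M → B) (w : Fin M) : ℝ :=
  ∑ o ∈ Finset.univ.filter
      (fun o : O => ∃ w', w' ≠ w ∧ Pch (c w) o ≤ Pch (c w') o), Pch (c w) o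

lemma mlErr_eq (M : ℕ) (Pch : B → O → ℝ) (c : Fin M → B) :
    mlErr M Pch c = (M : ℝ)⁻¹ * ∑ w, errW Pch c w := rfl

lemma errW_nonneg (Pch : B → O → ℝ) (hP : ∀ b o, 0 ≤ Pch b o) (c : Fin M → B) (w : Fin M) :
    0 ≤ errW Pch c w :=
  Finset.sum_nonneg fun o _ => hP _ o

lemma mlErr_nonneg (M : ℕ) (Pch : B → O → ℝ) (hP : ∀ b o, 0 ≤ Pch b o) (c : Fin M → B) :
    0 ≤ mlErr M Pch c := by
  rw [mlErr_eq]
  exact mul_nonneg (inv_nonneg.2 (Nat.cast_nonneg M))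
    (Finset.sum_nonneg fun w _ => errW_nonneg Pch hP c w)

lemma errW_comp_le (Pch : B → O → ℝ) (hP : ∀ b o, 0 ≤ Pch b o) (c : Fin M → B)
    (e : Fin M' → Fin M) (he : Function.Injective e) (k : Fin M') :
    errW Pch (c ∘ e) k ≤ errW Pch c (e k) := by
  refine Finset.sum_le_sum_of_subset_of_nonneg ?_ (fun o _ _ => hP _ o)
  intro o ho
  rw [Finset.mem_filter] at ho ⊢
  obtain ⟨-, w', hw', hle⟩ := ho
  exact ⟨Finset.mem_univ o, e w', fun h => hw' (he h), hle⟩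

lemma sum_errW_comp_le (Pch : B → O → ℝ) (hP : ∀ b o, 0 ≤ Pch b o) (c : Fin M → B)
    (e : Fin M' → Fin M) (he : Function.Injective e) :
    ∑ k, errW Pch (c ∘ e) k ≤ ∑ i, errW Pch c i := by
  calc ∑ k, errW Pch (c ∘ e) k ≤ ∑ k, errW Pch c (e k) :=
        Finset.sum_le_sum fun k _ => errW_comp_le Pch hP c e he k
  _ = ∑ i ∈ Finset.univ.image e, errW Pch c i :=
        (Finset.sum_image (fun a _ b _ h => he h)).symm
  _ ≤ ∑ i, errW Pch c i :=
        Finset.sum_le_sum_of_subset_of_nonneg (Finset.subset_univ _)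
          (fun i _ _ => errW_nonneg Pch hP c i)

end ErrAux

section SelAux

variable {T : Type} [DecidableEq T] [Fintype T] {N M : ℕ}

/-- positions (messages) whose codeword has type `τ` -/
noncomputable def tpos (τ : T → ℕ) (c : Fin M → Fin N → T) : Finset (Fin M) :=
  Finset.univ.filter fun w => typeOf (c w) = τ

/-- a canonical choice of `M'` positions with type `τ` -/
noncomputable def sset (M' : ℕ) (τ : T → ℕ) (c : Fin M → Fin N → T) : Finset (Fin M) :=
  pickSet M' (tpos τ c)

/-- enumeration of `sset` -/
noncomputable def embf (M' : ℕ) (τ : T → ℕ) (hM : 0 < M) (c : Fin M → Fin N → T)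
    (k : Fin M') : Fin M :=
  @dite _ ((sset M' τ c).card = M') (Classical.propDecidable _)
    (fun h => ((sset M' τ c).orderIsoOfFin h k : Fin M)) (fun _ => ⟨0, hM⟩)

/-- the selected sub-codebook of `M'` codewords of type `τ` -/
noncomputable def phif (M' : ℕ) (τ : T → ℕ) (hM : 0 < M) (c : Fin M → Fin N → T) :
    Fin M' → Fin N → T :=
  fun k => c (embf M' τ hM c k)

/-- replace the selected sub-codebook by `d` -/
noncomputable def rhof (M' : ℕ) (τ : T → ℕ) (hM : 0 < M) (d : Fin M' → Fin N → T)
    (c : Fin M → Fin N → T) : Fin M → Fin N → T :=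
  fun i => @dite _ (∃ k, embf M' τ hM c k = i) (Classical.propDecidable _)
    (fun h => d h.choose) (fun _ => c i)

variable {M' : ℕ} {τ : T → ℕ} {hM : 0 < M} {c : Fin M → Fin N → T} {d d' : Fin M' → Fin N → T}

lemma sset_card (hc : M' ≤ (tpos τ c).card) : (sset M' τ c).card = M' :=
  pickSet_card hc

lemma embf_mem (hc : M' ≤ (tpos τ c).card) (k : Fin M') :
    embf M' τ hM c k ∈ sset M' τ c := by
  rw [embf, dif_pos (sset_card hc)]
  exact ((sset M' τ c).orderIsoOfFin (sset_card hc) k).2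

lemma typeOf_embf (hc : M' ≤ (tpos τ c).card) (k : Fin M') :
    typeOf (c (embf M' τ hM c k)) = τ := by
  have := pickSet_subset M' (tpos τ c) (embf_mem (hM := hM) hc k)
  exact (Finset.mem_filter.1 this).2

lemma embf_inj (hc : M' ≤ (tpos τ c).card) :
    Function.Injective (embf M' τ hM c) := by
  intro k1 k2 h
  rw [embf, embf, dif_pos (sset_card hc), dif_pos (sset_card hc)] at h
  exact ((sset M' τ c).orderIsoOfFin (sset_card hc)).injective (Subtype.coe_injective h)

lemma rhof_apply_embf (hc : M' ≤ (tpos τ c).card) (k : Fin M') :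
    rhof M' τ hM d c (embf M' τ hM c k) = d k := by
  have hex : ∃ k', embf M' τ hM c k' = embf M' τ hM c k := ⟨k, rfl⟩
  rw [rhof, dif_pos hex]
  rw [embf_inj hc hex.choose_spec]

lemma tpos_rhof (hc : M' ≤ (tpos τ c).card) (hd : ∀ k, typeOf (d k) = τ) :
    tpos τ (rhof M' τ hM d c) = tpos τ c := by
  ext i
  simp only [tpos, Finset.mem_filter, Finset.mem_univ, true_and]
  by_cases h : ∃ k, embf M' τ hM c k = i
  · have h1 : typeOf (c i) = τ := by
      rw [← h.choose_spec]; exact typeOf_embf hc _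
    rw [rhof, dif_pos h, hd h.choose, h1]
  · rw [rhof, dif_neg h]

lemma sset_rhof (hc : M' ≤ (tpos τ c).card) (hd : ∀ k, typeOf (d k) = τ) :
    sset M' τ (rhof M' τ hM d c) = sset M' τ c := by
  rw [sset, sset, tpos_rhof hc hd]

lemma embf_rhof (hc : M' ≤ (tpos τ c).card) (hd : ∀ k, typeOf (d k) = τ) :
    embf M' τ hM (rhof M' τ hM d c) = embf M' τ hM c := by
  funext k
  have key : ∀ s s' : Finset (Fin M), s = s' →
      (@dite _ (s.card = M') (Classical.propDecidable _)
        (fun h => ((s.orderIsoOfFin h) k : Fin M)) (fun _ => ⟨0, hM⟩)) =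
      (@dite _ (s'.card = M') (Classical.propDecidable _)
        (fun h => ((s'.orderIsoOfFin h) k : Fin M)) (fun _ => ⟨0, hM⟩)) := by
    rintro s s' rfl; rfl
  exact key _ _ (sset_rhof hc hd)

lemma phif_rhof (hc : M' ≤ (tpos τ c).card) (hd : ∀ k, typeOf (d k) = τ) :
    phif M' τ hM (rhof M' τ hM d c) = d := by
  funext k
  show (rhof M' τ hM d c) (embf M' τ hM (rhof M' τ hM d c) k) = d k
  rw [embf_rhof hc hd, rhof_apply_embf hc]

lemma rhof_rhof (hc : M' ≤ (tpos τ c).card) (hd' : ∀ k, typeOf (d' k) = τ)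
    (hphi : phif M' τ hM c = d) :
    rhof M' τ hM d (rhof M' τ hM d' c) = c := by
  funext i
  show (@dite _ (∃ k, embf M' τ hM (rhof M' τ hM d' c) k = i) (Classical.propDecidable _)
    (fun h => d h.choose) (fun _ => rhof M' τ hM d' c i)) = c i
  simp only [embf_rhof hc hd']
  by_cases h : ∃ k, embf M' τ hM c k = i
  · rw [dif_pos h, ← hphi]
    show c (embf M' τ hM c h.choose) = c i
    rw [h.choose_spec]
  · rw [dif_neg h, rhof, dif_neg h]

lemma rhof_apply_eq (hc : M' ≤ (tpos τ c).card) (hd : ∀ k, typeOf (d k) = τ)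
    (q : (Fin N → T) → ℝ) (hq : ∀ b b', typeOf b = typeOf b' → q b = q b') (i : Fin M) :
    q (rhof M' τ hM d c i) = q (c i) := by
  by_cases h : ∃ k, embf M' τ hM c k = i
  · rw [rhof, dif_pos h]
    refine hq _ _ ?_
    rw [hd h.choose]
    rw [← h.choose_spec, typeOf_embf hc]
  · rw [rhof, dif_neg h]

end SelAux

section MainAux

variable {T : Type} [DecidableEq T] [Fintype T] {N : ℕ}

/-- The channel-independent selection of a good type `τ`: some type class collects at least
`1/L` of the product measure on codebooks of `M'·L` codewords, in the sense that with
probability at least `1/L` at least `M'` of the codewords have type `τ`. -/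
lemma select_type (Qtree : T → ℝ) (hQ0 : ∀ a, 0 ≤ Qtree a) (hQ1 : ∑ a, Qtree a = 1)
    (M' L : ℕ) (hM' : 0 < M') (hL : 0 < L)
    (hcard : (Finset.univ.image (typeOf (T := T) (N := N))).card ≤ L) :
    ∃ τ : T → ℕ, (∃ b : Fin N → T, typeOf b = τ) ∧
      ((L : ℝ))⁻¹ ≤ ∑ c ∈ Finset.univ.filter
        (fun c : Fin (M' * L) → Fin N → T => M' ≤ (tpos τ c).card),
        ∏ w, ∏ i, Qtree (c w i) := by
  classical
  have hTne : Nonempty T := by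
    by_contra h
    rw [not_nonempty_iff] at h
    rw [Finset.univ_eq_empty, Finset.sum_empty] at hQ1
    exact one_ne_zero hQ1.symm
  have hBne : Nonempty (Fin N → T) := ⟨fun _ => hTne.some⟩
  -- every codebook has a "majority" type by pigeonhole
  have pigeon : ∀ c : Fin (M' * L) → Fin N → T,
      ∃ τ0 ∈ Finset.univ.image (typeOf (T := T) (N := N)), M' ≤ (tpos τ0 c).card := by
    intro c
    by_contra hcon
    push_neg at hcon
    have hsum : (Finset.univ : Finset (Fin (M' * L))).card
        = ∑ τ0 ∈ Finset.univ.image (typeOf (T := T) (N := N)), (tpos τ0 c).card :=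
      Finset.card_eq_sum_card_fiberwise
        (f := fun w => typeOf (c w)) (fun w _ => Finset.mem_image_of_mem _ (Finset.mem_univ _))
    have h1 : M' * L ≤ ∑ τ0 ∈ Finset.univ.image (typeOf (T := T) (N := N)),
        (tpos τ0 c).card := by
      rw [← hsum, Finset.card_univ, Fintype.card_fin]
    have h2 : ∑ τ0 ∈ Finset.univ.image (typeOf (T := T) (N := N)), (tpos τ0 c).card
        ≤ (Finset.univ.image (typeOf (T := T) (N := N))).card * (M' - 1) := by
      calc ∑ τ0 ∈ Finset.univ.image (typeOf (T := T) (N := N)), (tpos τ0 c).card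
          ≤ ∑ _τ0 ∈ Finset.univ.image (typeOf (T := T) (N := N)), (M' - 1) :=
            Finset.sum_le_sum fun τ0 hτ0 => Nat.le_sub_one_of_lt (hcon τ0 hτ0)
        _ = _ := by rw [Finset.sum_const, smul_eq_mul]
    have h3 : (Finset.univ.image (typeOf (T := T) (N := N))).card * (M' - 1)
        ≤ L * (M' - 1) := Nat.mul_le_mul_right _ hcard
    have h5 : L * M' ≤ L * (M' - 1) := by
      rw [mul_comm]
      exact (h1.trans h2).trans h3
    have h6 : M' ≤ M' - 1 := Nat.le_of_mul_le_mul_left h5 hL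
    omega
  -- the total weight of codebooks is one
  have hQNsum : ∑ b : Fin N → T, ∏ i, Qtree (b i) = 1 := by
    have h := Fintype.sum_pow Qtree N
    rw [hQ1, one_pow] at h
    exact h.symm
  have hWsum : ∑ c : Fin (M' * L) → Fin N → T, ∏ w, ∏ i, Qtree (c w i) = 1 := by
    have h := Fintype.sum_pow (fun b : Fin N → T => ∏ i, Qtree (b i)) (M' * L)
    rw [hQNsum, one_pow] at h
    exact h.symm
  have hW0 : ∀ c : Fin (M' * L) → Fin N → T, 0 ≤ ∏ w, ∏ i, Qtree (c w i) :=
    fun c => Finset.prod_nonneg fun w _ => Finset.prod_nonneg fun i _ => hQ0 _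
  -- probabilistic pigeonhole over the at most L types
  have hFsum : (1 : ℝ) ≤ ∑ τ0 ∈ Finset.univ.image (typeOf (T := T) (N := N)),
      ∑ c ∈ Finset.univ.filter
        (fun c : Fin (M' * L) → Fin N → T => M' ≤ (tpos τ0 c).card),
        ∏ w, ∏ i, Qtree (c w i) := by
    rw [Finset.sum_congr rfl (fun τ0 _ => Finset.sum_filter _ _)]
    rw [Finset.sum_comm]
    calc (1 : ℝ) = ∑ c : Fin (M' * L) → Fin N → T, ∏ w, ∏ i, Qtree (c w i) := hWsum.symm
    _ ≤ _ := by
        refine Finset.sum_le_sum fun c _ => ?_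
        obtain ⟨τ0, hτ0, hge⟩ := pigeon c
        have := Finset.single_le_sum
          (f := fun τ1 => if M' ≤ (tpos τ1 c).card then ∏ w, ∏ i, Qtree (c w i) else 0)
          (fun τ1 _ => by split
                          · exact hW0 c
                          · exact le_refl 0) hτ0
        rwa [if_pos hge] at this
  by_contra hcon
  push_neg at hcon
  have hne : (Finset.univ.image (typeOf (T := T) (N := N))).Nonempty :=
    ⟨_, Finset.mem_image_of_mem _ (Finset.mem_univ hBne.some)⟩
  have hlt := Finset.sum_lt_sum_of_nonempty hne
    (f := fun τ0 => ∑ c ∈ Finset.univ.filter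
        (fun c : Fin (M' * L) → Fin N → T => M' ≤ (tpos τ0 c).card),
        ∏ w, ∏ i, Qtree (c w i))
    (g := fun _ => ((L : ℝ))⁻¹)
    (fun τ0 hτ0 => hcon τ0 (by obtain ⟨b, -, hb⟩ := Finset.mem_image.1 hτ0; exact ⟨b, hb⟩))
  rw [Finset.sum_const, nsmul_eq_mul] at hlt
  have hLR : (0 : ℝ) < L := by exact_mod_cast hL
  have hcardR : (((Finset.univ.image (typeOf (T := T) (N := N))).card : ℝ)) ≤ (L : ℝ) :=
    Nat.cast_le.2 hcard
  have : ((Finset.univ.image (typeOf (T := T) (N := N))).card : ℝ) * (L : ℝ)⁻¹ ≤ 1 := by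
    rw [← mul_inv_cancel₀ hLR.ne']
    exact mul_le_mul_of_nonneg_right hcardR (inv_nonneg.2 hLR.le)
  linarith


set_option maxHeartbeats 1000000 in
/-- Main bound: once a good type `τ` is selected (channel-independently), uniform random
coding on its type class with `M'` messages is at most `L²` worse than i.i.d. random coding
with `M'·L` messages. -/
lemma main_bound (Qtree : T → ℝ) (hQ0 : ∀ a, 0 ≤ Qtree a)
    (M' L : ℕ) (hM' : 0 < M') (hL : 0 < L)
    (τ : T → ℕ) (bτ : Fin N → T) (hbτ : typeOf bτ = τ)
    (hFτ : ((L : ℝ))⁻¹ ≤ ∑ c ∈ Finset.univ.filter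
        (fun c : Fin (M' * L) → Fin N → T => M' ≤ (tpos τ c).card),
        ∏ w, ∏ i, Qtree (c w i))
    (O : Type) [Fintype O] (Pch : (Fin N → T) → O → ℝ) (hP0 : ∀ b o, 0 ≤ Pch b o) :
    randErr M' (fun b => if typeOf b = τ
        then ((Finset.univ.filter fun b' : Fin N → T => typeOf b' = τ).card : ℝ)⁻¹ else 0)
        Pch ≤
      (L : ℝ) ^ 2 * randErr (M' * L) (fun b => ∏ i, Qtree (b i)) Pch := by
  classical
  have hMpos : 0 < M' * L := Nat.mul_pos hM' hL
  obtain ⟨Atau, hAdef⟩ : ∃ A, A = Finset.univ.filter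
      (fun c : Fin (M' * L) → Fin N → T => M' ≤ (tpos τ c).card) := ⟨_, rfl⟩
  obtain ⟨Dset, hDdef⟩ : ∃ Ds, Ds = Finset.univ.filter
      (fun d : Fin M' → Fin N → T => ∀ k, typeOf (d k) = τ) := ⟨_, rfl⟩
  obtain ⟨Tcl, hTdef⟩ : ∃ Tc, Tc = Finset.univ.filter
      (fun b' : Fin N → T => typeOf b' = τ) := ⟨_, rfl⟩
  rw [← hAdef] at hFτ
  rw [show (fun b : Fin N → T => if typeOf b = τ
      then ((Finset.univ.filter fun b' : Fin N → T => typeOf b' = τ).card : ℝ)⁻¹ else 0)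
    = (fun b : Fin N → T => if typeOf b = τ then ((Tcl.card : ℝ))⁻¹ else 0) by rw [hTdef]]
  have hAmem : ∀ cc : Fin (M' * L) → Fin N → T, cc ∈ Atau ↔ M' ≤ (tpos τ cc).card := by
    intro cc; rw [hAdef, Finset.mem_filter]; simp
  have hDmem : ∀ dd : Fin M' → Fin N → T, dd ∈ Dset ↔ ∀ k, typeOf (dd k) = τ := by
    intro dd; rw [hDdef, Finset.mem_filter]; simp
  obtain ⟨F0, hF0mem⟩ : ∃ F0 : Finset (Fin (M' * L) → Fin N → T),
      ∀ e, e ∈ F0 ↔ e ∈ Atau ∧ phif M' τ hMpos e = fun _ => bτ :=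
    ⟨Atau.filter (fun e => phif M' τ hMpos e = fun _ => bτ), fun e => Finset.mem_filter⟩
  have hd0τ : ∀ _k : Fin M', typeOf ((fun _ : Fin M' => bτ) _k) = τ := fun _ => hbτ
  have hd0 : (fun _ : Fin M' => bτ) ∈ Dset := (hDmem _).2 hd0τ
  have hq : ∀ b b' : Fin N → T, typeOf b = typeOf b' →
      (∏ i, Qtree (b i)) = ∏ i, Qtree (b' i) :=
    fun b b' h => prod_comp_eq_of_typeOf_eq Qtree h
  have hW0 : ∀ cc : Fin (M' * L) → Fin N → T, 0 ≤ ∏ w, ∏ i, Qtree (cc w i) :=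
    fun cc => Finset.prod_nonneg fun w _ => Finset.prod_nonneg fun i _ => hQ0 _
  -- the core resampling identity
  have keysum : ∀ g : (Fin M' → Fin N → T) → ℝ,
      ∑ cc ∈ Atau, (∏ w, ∏ i, Qtree (cc w i)) * g (phif M' τ hMpos cc)
      = (∑ e ∈ F0, ∏ w, ∏ i, Qtree (e w i)) * ∑ d ∈ Dset, g d := by
    intro g
    rw [Finset.sum_mul_sum]
    rw [← Finset.sum_product']
    refine Finset.sum_nbij'
      (i := fun cc => (rhof M' τ hMpos (fun _ => bτ) cc, phif M' τ hMpos cc))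
      (j := fun p => rhof M' τ hMpos p.2 p.1) ?_ ?_ ?_ ?_ ?_
    · intro cc hcc
      have hcA := (hAmem cc).1 hcc
      refine Finset.mem_product.2 ⟨?_, ?_⟩
      · show rhof M' τ hMpos (fun _ => bτ) cc ∈ F0
        refine (hF0mem _).2 ⟨(hAmem _).2 ?_, phif_rhof hcA hd0τ⟩
        rw [tpos_rhof hcA hd0τ]
        exact hcA
      · show phif M' τ hMpos cc ∈ Dset
        exact (hDmem _).2 fun k => typeOf_embf hcA k
    · intro p hp
      rw [Finset.mem_product] at hp
      obtain ⟨hp1, hp2⟩ := hp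
      have hcA := (hAmem p.1).1 ((hF0mem p.1).1 hp1).1
      exact (hAmem _).2 (by rw [tpos_rhof hcA ((hDmem _).1 hp2)]; exact hcA)
    · intro cc hcc
      dsimp only
      have hcA := (hAmem cc).1 hcc
      exact rhof_rhof hcA hd0τ rfl
    · intro p hp
      rw [Finset.mem_product] at hp
      obtain ⟨hp1, hp2⟩ := hp
      obtain ⟨hp1A, hphi⟩ := (hF0mem p.1).1 hp1
      have hcA := (hAmem p.1).1 hp1A
      have hdτ := (hDmem p.2).1 hp2
      have e1 : rhof M' τ hMpos (fun _ => bτ) (rhof M' τ hMpos p.2 p.1) = p.1 :=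
        rhof_rhof hcA hdτ hphi
      have e2 : phif M' τ hMpos (rhof M' τ hMpos p.2 p.1) = p.2 := phif_rhof hcA hdτ
      exact Prod.ext e1 e2
    · intro cc hcc
      dsimp only
      have hcA := (hAmem cc).1 hcc
      have hWeq : (∏ w, ∏ i, Qtree (cc w i))
          = ∏ w, ∏ i, Qtree (rhof M' τ hMpos (fun _ => bτ) cc w i) :=
        Finset.prod_congr rfl fun w _ =>
          (rhof_apply_eq hcA hd0τ (fun b => ∏ i, Qtree (b i)) hq w).symm
      rw [← hWeq]
  -- the per-codebook restriction inequality
  have perc : ∀ cc ∈ Atau,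
      ((L : ℝ))⁻¹ * mlErr M' Pch (phif M' τ hMpos cc) ≤ mlErr (M' * L) Pch cc := by
    intro cc hcc
    have hcA := (hAmem cc).1 hcc
    rw [mlErr_eq, mlErr_eq]
    have hS : ∑ k, errW Pch (phif M' τ hMpos cc) k ≤ ∑ i, errW Pch cc i := by
      have hcomp : phif M' τ hMpos cc = cc ∘ embf M' τ hMpos cc := rfl
      rw [hcomp]
      exact sum_errW_comp_le Pch hP0 cc _ (embf_inj hcA)
    calc ((L : ℝ))⁻¹ * ((M' : ℝ)⁻¹ * ∑ k, errW Pch (phif M' τ hMpos cc) k)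
        = ((M' * L : ℕ) : ℝ)⁻¹ * ∑ k, errW Pch (phif M' τ hMpos cc) k := by
          push_cast
          ring
      _ ≤ ((M' * L : ℕ) : ℝ)⁻¹ * ∑ i, errW Pch cc i :=
          mul_le_mul_of_nonneg_left hS (inv_nonneg.2 (Nat.cast_nonneg _))
  -- uniform-over-type random coding error, rewritten
  have hunif : randErr M' (fun b : Fin N → T => if typeOf b = τ
      then ((Tcl.card : ℝ))⁻¹ else 0) Pch
      = ((Tcl.card : ℝ) ^ M')⁻¹ * ∑ d ∈ Dset, mlErr M' Pch d := by
    simp only [randErr]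
    have hvan : ∀ dd : Fin M' → Fin N → T, dd ∈ Finset.univ → dd ∉ Dset →
        (∏ w, if typeOf (dd w) = τ then ((Tcl.card : ℝ))⁻¹ else 0) * mlErr M' Pch dd = 0 := by
      intro dd _ hdd
      rw [hDmem] at hdd
      push_neg at hdd
      obtain ⟨k, hk⟩ := hdd
      have hz : (∏ w, if typeOf (dd w) = τ then ((Tcl.card : ℝ))⁻¹ else 0) = 0 :=
        Finset.prod_eq_zero (Finset.mem_univ k) (if_neg hk)
      rw [hz, zero_mul]
    rw [← Finset.sum_subset (Finset.subset_univ Dset) hvan]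
    calc ∑ dd ∈ Dset, (∏ w, if typeOf (dd w) = τ then ((Tcl.card : ℝ))⁻¹ else 0)
          * mlErr M' Pch dd
        = ∑ dd ∈ Dset, ((Tcl.card : ℝ) ^ M')⁻¹ * mlErr M' Pch dd := by
          refine Finset.sum_congr rfl fun dd hdd => ?_
          congr 1
          rw [Finset.prod_congr rfl (fun w _ => if_pos ((hDmem dd).1 hdd w)),
            Finset.prod_const, Finset.card_univ, Fintype.card_fin, inv_pow]
      _ = _ := by rw [← Finset.mul_sum]
  -- cardinality of the set of uniform sub-codebooks
  have hDcard : Dset.card = Tcl.card ^ M' := by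
    have hpi : Dset = Fintype.piFinset (fun _ : Fin M' => Tcl) := by
      ext dd
      rw [hDmem, Fintype.mem_piFinset]
      refine forall_congr' fun k => ?_
      rw [hTdef, Finset.mem_filter]
      simp
    rw [hpi, Fintype.card_piFinset, Finset.prod_const, Finset.card_univ, Fintype.card_fin]
  -- lower bound on the i.i.d. random coding error
  have hlow : ((L : ℝ))⁻¹ * ((∑ e ∈ F0, ∏ w, ∏ i, Qtree (e w i))
        * ∑ d ∈ Dset, mlErr M' Pch d)
      ≤ randErr (M' * L) (fun b => ∏ i, Qtree (b i)) Pch := by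
    simp only [randErr]
    calc ((L : ℝ))⁻¹ * ((∑ e ∈ F0, ∏ w, ∏ i, Qtree (e w i)) * ∑ d ∈ Dset, mlErr M' Pch d)
        = (∑ e ∈ F0, ∏ w, ∏ i, Qtree (e w i))
            * ∑ d ∈ Dset, ((L : ℝ))⁻¹ * mlErr M' Pch d := by
          rw [← Finset.mul_sum]
          ring
      _ = ∑ cc ∈ Atau, (∏ w, ∏ i, Qtree (cc w i))
            * (((L : ℝ))⁻¹ * mlErr M' Pch (phif M' τ hMpos cc)) :=
          (keysum fun d => ((L : ℝ))⁻¹ * mlErr M' Pch d).symm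
      _ ≤ ∑ cc ∈ Atau, (∏ w, ∏ i, Qtree (cc w i)) * mlErr (M' * L) Pch cc :=
          Finset.sum_le_sum fun cc hcc =>
            mul_le_mul_of_nonneg_left (perc cc hcc) (hW0 cc)
      _ ≤ ∑ cc : Fin (M' * L) → Fin N → T,
            (∏ w, ∏ i, Qtree (cc w i)) * mlErr (M' * L) Pch cc :=
          Finset.sum_le_sum_of_subset_of_nonneg (Finset.subset_univ _)
            (fun cc _ _ => mul_nonneg (hW0 cc) (mlErr_nonneg _ _ hP0 cc))
  -- putting everything together
  have hS0 : 0 ≤ ∑ d ∈ Dset, mlErr M' Pch d :=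
    Finset.sum_nonneg fun d _ => mlErr_nonneg _ _ hP0 d
  have hLR : (0 : ℝ) < L := by exact_mod_cast hL
  have hLne : (L : ℝ) ≠ 0 := hLR.ne'
  have hTclpos : 0 < Tcl.card := Finset.card_pos.2
    ⟨bτ, by rw [hTdef, Finset.mem_filter]; exact ⟨Finset.mem_univ _, hbτ⟩⟩
  have hTR : (0 : ℝ) < (Tcl.card : ℝ) ^ M' := pow_pos (by exact_mod_cast hTclpos) M'
  have hF : ((L : ℝ))⁻¹ ≤ (∑ e ∈ F0, ∏ w, ∏ i, Qtree (e w i)) * (Tcl.card : ℝ) ^ M' := by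
    have h1 := keysum (fun _ => (1 : ℝ))
    simp only [mul_one] at h1
    rw [Finset.sum_const, nsmul_eq_mul, mul_one] at h1
    rw [h1] at hFτ
    rw [hDcard] at hFτ
    rwa [Nat.cast_pow] at hFτ
  have hkey3 : ((Tcl.card : ℝ) ^ M')⁻¹
      ≤ (L : ℝ) * ∑ e ∈ F0, ∏ w, ∏ i, Qtree (e w i) := by
    rw [inv_eq_one_div, div_le_iff₀ hTR]
    have h := mul_le_mul_of_nonneg_left hF hLR.le
    rw [mul_inv_cancel₀ hLne] at h
    calc (1 : ℝ) ≤ (L : ℝ) * ((∑ e ∈ F0, ∏ w, ∏ i, Qtree (e w i)) * (Tcl.card : ℝ) ^ M') := h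
      _ = _ := by ring
  rw [hunif]
  calc ((Tcl.card : ℝ) ^ M')⁻¹ * ∑ d ∈ Dset, mlErr M' Pch d
      ≤ ((L : ℝ) * ∑ e ∈ F0, ∏ w, ∏ i, Qtree (e w i)) * ∑ d ∈ Dset, mlErr M' Pch d :=
        mul_le_mul_of_nonneg_right hkey3 hS0
    _ = (L : ℝ) ^ 2 * (((L : ℝ))⁻¹
          * ((∑ e ∈ F0, ∏ w, ∏ i, Qtree (e w i)) * ∑ d ∈ Dset, mlErr M' Pch d)) := by
        field_simp
    _ ≤ (L : ℝ) ^ 2 * randErr (M' * L) (fun b => ∏ i, Qtree (b i)) Pch :=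
        mul_le_mul_of_nonneg_left hlow (by positivity)

end MainAux

theorem types_on_code_trees {X Z : Type} [Fintype X] [DecidableEq X] [Fintype Z]
    (m N : ℕ) (hm : 0 < m) (hN : 0 < N)
    (D : ℕ) (hD : D = (Fintype.card Z ^ m - 1) / (Fintype.card Z - 1))
    (Qtree : (Fin D → X) → ℝ)
    (hQ0 : ∀ a, 0 ≤ Qtree a) (hQ1 : ∑ a, Qtree a = 1)
    (M' : ℕ) (hM' : 0 < M') :
    ∃ τ : (Fin D → X) → ℕ,
      (∃ b : Fin N → Fin D → X, typeOf b = τ) ∧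
      ∀ (O : Type) (_ : Fintype O) (Pch : (Fin N → Fin D → X) → O → ℝ),
        (∀ b o, 0 ≤ Pch b o) → (∀ b, ∑ o, Pch b o = 1) →
        randErr M'
            (fun b => if typeOf b = τ
              then ((Finset.univ.filter
                  fun b' : Fin N → Fin D → X => typeOf b' = τ).card : ℝ)⁻¹
              else 0) Pch ≤
          (N + 1 : ℝ) ^ (2 * Fintype.card (Fin D → X)) *
            randErr (M' * (N + 1) ^ Fintype.card (Fin D → X))
              (fun b => ∏ i, Qtree (b i)) Pch := by
  classical
  obtain ⟨τ, hwit, hFτ⟩ := select_type (N := N) Qtree hQ0 hQ1 M'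
    ((N + 1) ^ Fintype.card (Fin D → X)) hM' (pow_pos (Nat.succ_pos N) _)
    card_image_typeOf_le
  refine ⟨τ, hwit, ?_⟩
  intro O instO Pch hP0 _hP1
  obtain ⟨bτ, hbτ⟩ := hwit
  have h := @main_bound (Fin D → X) _ _ N Qtree hQ0 M'
    ((N + 1) ^ Fintype.card (Fin D → X)) hM' (pow_pos (Nat.succ_pos N) _)
    τ bτ hbτ hFτ O instO Pch hP0
  have hfac : ((((N + 1) ^ Fintype.card (Fin D → X) : ℕ)) : ℝ) ^ 2
      = (N + 1 : ℝ) ^ (2 * Fintype.card (Fin D → X)) := by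
    push_cast
    rw [← pow_mul, Nat.mul_comm]
  rw [hfac] at h
  exact h
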